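/- Mixed small-gain/passivity pointwise lemma: let M₁, M₂ be complex square matrices such that either (M₁ + M₁* > 0 and M₂ + M₂* > 0) or (‖M₁‖ < 1 and ‖M₂‖ < 1). Then I + M₁M₂ is invertible. -/

import Mathlib

open Matrix
open scoped ComplexOrder
open scoped Matrix.Norms.L2Operator

lemma stmt19_herm_dot {n : ℕ} (M : Matrix (Fin n) (Fin n) ℂ) (v : Fin n → ℂ) :
    star v ⬝ᵥ (Mᴴ *ᵥ v) = star (star v ⬝ᵥ (M *ᵥ v)) := by
  rw [mulVec_conjTranspose, dotProduct_star, star_star, ← dotProduct_mulVec]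

/-- Mixed small-gain/passivity pointwise lemma: if either both M₁, M₂ have
positive definite Hermitian part, or both have operator norm less than 1,
then I + M₁M₂ is invertible. -/
theorem stmt19 {n : ℕ} (M₁ M₂ : Matrix (Fin n) (Fin n) ℂ)
    (h : ((M₁ + M₁ᴴ).PosDef ∧ (M₂ + M₂ᴴ).PosDef) ∨ (‖M₁‖ < 1 ∧ ‖M₂‖ < 1)) :
    IsUnit ((1 : Matrix (Fin n) (Fin n) ℂ) + M₁ * M₂) := by
  rcases h with ⟨h₁, h₂⟩ | ⟨h₁, h₂⟩
  · rw [Matrix.isUnit_iff_isUnit_det, isUnit_iff_ne_zero]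
    intro hdet
    obtain ⟨x, hx, hx0⟩ := Matrix.exists_mulVec_eq_zero_iff.mpr hdet
    set y : Fin n → ℂ := M₂ *ᵥ x with hy
    have hxy : x = -(M₁ *ᵥ y) := by
      have := hx0
      rw [add_mulVec, one_mulVec, ← Matrix.mulVec_mulVec] at this
      linear_combination (norm := module) this
    have hyne : y ≠ 0 := by
      intro h0
      apply hx
      rw [hxy, h0, mulVec_zero, neg_zero]
    have key2 := h₂.dotProduct_mulVec_pos hx
    have key1 := h₁.dotProduct_mulVec_pos hyne
    set c : ℂ := star x ⬝ᵥ y with hc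
    have e2 : star x ⬝ᵥ ((M₂ + M₂ᴴ) *ᵥ x) = c + star c := by
      rw [add_mulVec, dotProduct_add, stmt19_herm_dot, hc, hy]
    have hM1y : M₁ *ᵥ y = -x := by rw [hxy, neg_neg]
    have hyx : star y ⬝ᵥ x = star c := by
      rw [hc, star_dotProduct]
    have e1 : star y ⬝ᵥ ((M₁ + M₁ᴴ) *ᵥ y) = -(c + star c) := by
      rw [add_mulVec, dotProduct_add, stmt19_herm_dot, hM1y, dotProduct_neg, hyx]
      rw [star_neg, star_star]
      ring
    rw [e2] at key2
    rw [e1] at key1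
    exact lt_asymm key2 (neg_pos.mp key1)
  · have hlt : ‖-(M₁ * M₂)‖ < 1 := by
      rw [norm_neg]
      calc ‖M₁ * M₂‖ ≤ ‖M₁‖ * ‖M₂‖ := norm_mul_le _ _
      _ < 1 := by
        have h₁0 : (0:ℝ) ≤ ‖M₁‖ := norm_nonneg _
        have h₂0 : (0:ℝ) ≤ ‖M₂‖ := norm_nonneg _
        nlinarith
    have := (Units.oneSub (-(M₁ * M₂)) hlt).isUnit
    simpa [sub_neg_eq_add] using this
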